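/- arXiv:math/0511719 — 4 statements merged into one kernel-verified Lean document; each statement's English description precedes it below -/
import Mathlib

section
/- Let U ⊆ ℂ be open and let f : ℂ → M_d(ℂ) be analytic on U with f'(x) invertible for all x ∈ U. Let φ(x) = (αx+β)/(γx+δ) be a Möbius transformation with αδ − βγ ≠ 0, let V ⊆ ℂ be open with γx+δ ≠ 0 and φ(x) ∈ U for all x ∈ V. Then the matrix-valued Schwartz derivative is invariant under this change of variable as a quadratic differential: for all x ∈ V, S(f∘φ)(x) = φ'(x)² · S(f)(φ(x)). -/
open Matrix

attribute [local instance] Matrix.normedAddCommGroup Matrix.normedSpace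

section Helpers

variable {d : ℕ}

noncomputable def entryCLM (i j : Fin d) : Matrix (Fin d) (Fin d) ℂ →L[ℂ] ℂ :=
  LinearMap.toContinuousLinearMap
    { toFun := fun M => M i j, map_add' := fun _ _ => rfl, map_smul' := fun _ _ => rfl }

lemma diffAt_entry {g : ℂ → Matrix (Fin d) (Fin d) ℂ} {x : ℂ}
    (hg : DifferentiableAt ℂ g x) (i j : Fin d) :
    DifferentiableAt ℂ (fun y => g y i j) x :=
  (entryCLM i j).differentiableAt.comp x hg

lemma diffAt_of_entries {g : ℂ → Matrix (Fin d) (Fin d) ℂ} {x : ℂ}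
    (h : ∀ i j, DifferentiableAt ℂ (fun y => g y i j) x) :
    DifferentiableAt ℂ g x := by
  have hg : g = fun y => ∑ i : Fin d, ∑ j : Fin d, (g y i j) • Matrix.single i j (1 : ℂ) := by
    funext y
    conv_lhs => rw [matrix_eq_sum_single (g y)]
    simp [smul_single]
  rw [hg]
  exact DifferentiableAt.fun_sum fun i _ =>
    DifferentiableAt.fun_sum fun j _ => (h i j).smul_const _

lemma diffAt_det {g : ℂ → Matrix (Fin d) (Fin d) ℂ} {x : ℂ}
    (h : ∀ i j, DifferentiableAt ℂ (fun y => g y i j) x) :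
    DifferentiableAt ℂ (fun y => (g y).det) x := by
  simp only [Matrix.det_apply']
  exact DifferentiableAt.fun_sum fun σ _ =>
    (DifferentiableAt.fun_finsetProd fun i _ => h (σ i) i).const_mul _

lemma diffAt_adjugate {g : ℂ → Matrix (Fin d) (Fin d) ℂ} {x : ℂ}
    (h : ∀ i j, DifferentiableAt ℂ (fun y => g y i j) x) (i j : Fin d) :
    DifferentiableAt ℂ (fun y => (g y).adjugate i j) x := by
  simp only [Matrix.adjugate_apply]
  apply diffAt_det
  intro k l
  rcases eq_or_ne k j with hk | hk
  · simp [Matrix.updateRow_apply, hk]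
  · simpa [Matrix.updateRow_apply, hk] using h k l

lemma diffAt_inv {g : ℂ → Matrix (Fin d) (Fin d) ℂ} {x : ℂ}
    (h : ∀ i j, DifferentiableAt ℂ (fun y => g y i j) x)
    (hdet : (g x).det ≠ 0) :
    DifferentiableAt ℂ (fun y => (g y)⁻¹) x := by
  have heq : (fun y => (g y)⁻¹) = fun y => ((g y).det)⁻¹ • (g y).adjugate := by
    funext y
    rw [Matrix.inv_def, Ring.inverse_eq_inv']
  rw [heq]
  exact ((diffAt_det h).inv hdet).smul (diffAt_of_entries (diffAt_adjugate h))

lemma diffAt_matmul {A B : ℂ → Matrix (Fin d) (Fin d) ℂ} {x : ℂ}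
    (hA : DifferentiableAt ℂ A x) (hB : DifferentiableAt ℂ B x) :
    DifferentiableAt ℂ (fun y => A y * B y) x := by
  apply diffAt_of_entries
  intro i j
  simp only [Matrix.mul_apply]
  exact DifferentiableAt.fun_sum fun k _ => (diffAt_entry hA i k).mul (diffAt_entry hB k j)

end Helpers

lemma schwarz_alg {d : ℕ} (M N : Matrix (Fin d) (Fin d) ℂ) (γ D z : ℂ)
    (hz : z ≠ 0) (hD : D ≠ 0) :
    (2 * γ ^ 2 / z ^ 2) • (1 : Matrix (Fin d) (Fin d) ℂ)
      + ((D / z ^ 2) • ((D / z ^ 2) • N) + (-2 * γ * D / z ^ 3) • M)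
      - (1 / 2 : ℂ) • ((-2 * γ / z) • (1 : Matrix (Fin d) (Fin d) ℂ) + (D / z ^ 2) • M) ^ 2
    = (D / z ^ 2) ^ 2 • (N - (1 / 2 : ℂ) • M ^ 2) := by
  have hsq : ((-2 * γ / z) • (1 : Matrix (Fin d) (Fin d) ℂ) + (D / z ^ 2) • M) ^ 2
      = ((-2 * γ / z) * (-2 * γ / z)) • (1 : Matrix (Fin d) (Fin d) ℂ)
        + (2 * ((-2 * γ / z) * (D / z ^ 2))) • M
        + ((D / z ^ 2) * (D / z ^ 2)) • (M * M) := by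
    simp only [pow_two, mul_add, add_mul, smul_mul_assoc, mul_smul_comm, smul_smul,
      mul_one, one_mul]
    match_scalars <;> ring
  rw [hsq, pow_two M]
  match_scalars <;> field_simp <;> ring

/-- The matrix-valued Schwartz derivative coefficient
`S(f) = ((f')⁻¹f'')' - (1/2)((f')⁻¹f'')²`. -/
noncomputable def matS {d : ℕ} (f : ℂ → Matrix (Fin d) (Fin d) ℂ) :
    ℂ → Matrix (Fin d) (Fin d) ℂ :=
  fun x => deriv (fun t => (deriv f t)⁻¹ * deriv (deriv f) t) x
    - (1 / 2 : ℂ) • ((deriv f x)⁻¹ * deriv (deriv f) x) ^ 2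

/-- Invariance of the matrix Schwartz derivative under Möbius change of variable,
as a quadratic differential: `S(f∘φ) = (φ')² ⬝ (S(f)∘φ)`. -/
theorem matS_moebius_change_of_variable {d : ℕ} (U V : Set ℂ)
    (hU : IsOpen U) (hV : IsOpen V)
    (f : ℂ → Matrix (Fin d) (Fin d) ℂ) (hf : AnalyticOnNhd ℂ f U)
    (hf' : ∀ x ∈ U, IsUnit (deriv f x))
    (α β γ δ : ℂ) (hdet : α * δ - β * γ ≠ 0)
    (φ : ℂ → ℂ) (hφ : ∀ x, φ x = (α * x + β) / (γ * x + δ))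
    (hden : ∀ x ∈ V, γ * x + δ ≠ 0)
    (hmaps : ∀ x ∈ V, φ x ∈ U) :
    ∀ x ∈ V, matS (f ∘ φ) x = (deriv φ x) ^ 2 • matS f (φ x) := by
  intro x hx
  set D : ℂ := α * δ - β * γ with hD
  -- derivatives of φ
  have hφD : ∀ y : ℂ, γ * y + δ ≠ 0 → HasDerivAt φ (D / (γ * y + δ) ^ 2) y := by
    intro y hy
    have h1 : HasDerivAt (fun y : ℂ => α * y + β) α y := by
      simpa using ((hasDerivAt_id y).const_mul α).add_const β
    have h2 : HasDerivAt (fun y : ℂ => γ * y + δ) γ y := by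
      simpa using ((hasDerivAt_id y).const_mul γ).add_const δ
    have h3 := h1.fun_div h2 hy
    have heq : φ = fun y => (α * y + β) / (γ * y + δ) := funext hφ
    rw [heq]
    refine h3.congr_deriv ?_
    field_simp
    ring
  have hφ'D : ∀ y : ℂ, γ * y + δ ≠ 0 →
      HasDerivAt (fun y => D / (γ * y + δ) ^ 2) (-2 * γ * D / (γ * y + δ) ^ 3) y := by
    intro y hy
    have h2 : HasDerivAt (fun y : ℂ => (γ * y + δ) ^ 2) (2 * (γ * y + δ) * γ) y := by
      simpa using (((hasDerivAt_id y).const_mul γ).add_const δ).fun_pow 2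
    have h3 := (hasDerivAt_const y D).fun_div h2 (pow_ne_zero 2 hy)
    refine h3.congr_deriv ?_
    field_simp
    ring
  have hψD : ∀ y : ℂ, γ * y + δ ≠ 0 →
      HasDerivAt (fun y => -2 * γ / (γ * y + δ)) (2 * γ ^ 2 / (γ * y + δ) ^ 2) y := by
    intro y hy
    have h2 : HasDerivAt (fun y : ℂ => γ * y + δ) γ y := by
      simpa using ((hasDerivAt_id y).const_mul γ).add_const δ
    have h3 := (hasDerivAt_const y (-2 * γ)).fun_div h2 hy
    refine h3.congr_deriv ?_
    field_simp
    ring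

  have hz : γ * x + δ ≠ 0 := hden x hx
  -- analyticity of derivatives of f
  have hf1 : AnalyticOnNhd ℂ (deriv f) U := hf.deriv
  have hf2 : AnalyticOnNhd ℂ (deriv (deriv f)) U := hf1.deriv
  set A : ℂ → Matrix (Fin d) (Fin d) ℂ :=
    fun t => (deriv f t)⁻¹ * deriv (deriv f) t with hA
  have hAdiff : ∀ u ∈ U, DifferentiableAt ℂ A u := by
    intro u hu
    have hdetu : (deriv f u).det ≠ 0 :=
      ((Matrix.isUnit_iff_isUnit_det _).mp (hf' u hu)).ne_zero
    exact diffAt_matmul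
      (diffAt_inv (fun i j => diffAt_entry (hf1 u hu).differentiableAt i j) hdetu)
      (hf2 u hu).differentiableAt
  -- first derivative of f ∘ φ on V
  have hg' : ∀ y ∈ V, HasDerivAt (f ∘ φ)
      ((D / (γ * y + δ) ^ 2) • deriv f (φ y)) y := fun y hy =>
    HasDerivAt.scomp_of_eq y (hf (φ y) (hmaps y hy)).differentiableAt.hasDerivAt (hφD y (hden y hy)) rfl
  have hgd : ∀ y ∈ V, deriv (f ∘ φ) y = (D / (γ * y + δ) ^ 2) • deriv f (φ y) :=
    fun y hy => (hg' y hy).deriv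
  -- second derivative of f ∘ φ on V
  have hg2' : ∀ y ∈ V, HasDerivAt (fun z => (D / (γ * z + δ) ^ 2) • deriv f (φ z))
      ((D / (γ * y + δ) ^ 2) • ((D / (γ * y + δ) ^ 2) • deriv (deriv f) (φ y))
        + (-2 * γ * D / (γ * y + δ) ^ 3) • deriv f (φ y)) y := by
    intro y hy
    have h1 : HasDerivAt (fun z => deriv f (φ z))
        ((D / (γ * y + δ) ^ 2) • deriv (deriv f) (φ y)) y :=
      HasDerivAt.scomp_of_eq y (hf1 (φ y) (hmaps y hy)).differentiableAt.hasDerivAt (hφD y (hden y hy)) rfl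
    exact (hφ'D y (hden y hy)).smul h1
  have hgd2 : ∀ y ∈ V, deriv (deriv (f ∘ φ)) y
      = (D / (γ * y + δ) ^ 2) • ((D / (γ * y + δ) ^ 2) • deriv (deriv f) (φ y))
        + (-2 * γ * D / (γ * y + δ) ^ 3) • deriv f (φ y) := by
    intro y hy
    have heq : deriv (f ∘ φ) =ᶠ[nhds y] fun z => (D / (γ * z + δ) ^ 2) • deriv f (φ z) :=
      Filter.eventuallyEq_of_mem (hV.mem_nhds hy) (fun z hz => hgd z hz)
    exact heq.deriv_eq.trans (hg2' y hy).deriv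
  -- the log-derivative of f ∘ φ on V
  have hBy : ∀ y ∈ V, (deriv (f ∘ φ) y)⁻¹ * deriv (deriv (f ∘ φ)) y
      = (-2 * γ / (γ * y + δ)) • (1 : Matrix (Fin d) (Fin d) ℂ)
        + (D / (γ * y + δ) ^ 2) • A (φ y) := by
    intro y hy
    have hzy : γ * y + δ ≠ 0 := hden y hy
    have hc : (D / (γ * y + δ) ^ 2) ≠ 0 := div_ne_zero hdet (pow_ne_zero _ hzy)
    have hdM : IsUnit (deriv f (φ y)).det :=
      (Matrix.isUnit_iff_isUnit_det _).mp (hf' _ (hmaps y hy))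
    rw [hgd y hy, hgd2 y hy]
    have hsmulinv : ((D / (γ * y + δ) ^ 2) • deriv f (φ y))⁻¹
        = (D / (γ * y + δ) ^ 2)⁻¹ • (deriv f (φ y))⁻¹ := by
      have := Matrix.inv_smul' (deriv f (φ y)) (Units.mk0 _ hc) hdM
      simpa [Units.smul_def] using this
    rw [hsmulinv]
    simp only [mul_add, smul_mul_assoc, mul_smul_comm, smul_smul,
      Matrix.nonsing_inv_mul _ hdM, hA]
    match_scalars <;> field_simp <;> ring
  -- derivative of the log-derivative of f ∘ φ at x
  have hAx : DifferentiableAt ℂ A (φ x) := hAdiff (φ x) (hmaps x hx)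
  have hAφ : HasDerivAt (fun y => A (φ y)) ((D / (γ * x + δ) ^ 2) • deriv A (φ x)) x :=
    HasDerivAt.scomp_of_eq x hAx.hasDerivAt (hφD x hz) rfl
  have hRHS : HasDerivAt (fun y => (-2 * γ / (γ * y + δ)) • (1 : Matrix (Fin d) (Fin d) ℂ)
        + (D / (γ * y + δ) ^ 2) • A (φ y))
      ((2 * γ ^ 2 / (γ * x + δ) ^ 2) • (1 : Matrix (Fin d) (Fin d) ℂ)
        + ((D / (γ * x + δ) ^ 2) • ((D / (γ * x + δ) ^ 2) • deriv A (φ x))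
          + (-2 * γ * D / (γ * x + δ) ^ 3) • A (φ x))) x :=
    ((hψD x hz).smul_const _).add ((hφ'D x hz).smul hAφ)
  have hderivB : deriv (fun t => (deriv (f ∘ φ) t)⁻¹ * deriv (deriv (f ∘ φ)) t) x
      = (2 * γ ^ 2 / (γ * x + δ) ^ 2) • (1 : Matrix (Fin d) (Fin d) ℂ)
        + ((D / (γ * x + δ) ^ 2) • ((D / (γ * x + δ) ^ 2) • deriv A (φ x))
          + (-2 * γ * D / (γ * x + δ) ^ 3) • A (φ x)) := by
    have heq : (fun t => (deriv (f ∘ φ) t)⁻¹ * deriv (deriv (f ∘ φ)) t)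
        =ᶠ[nhds x] fun y => (-2 * γ / (γ * y + δ)) • (1 : Matrix (Fin d) (Fin d) ℂ)
          + (D / (γ * y + δ) ^ 2) • A (φ y) :=
      Filter.eventuallyEq_of_mem (hV.mem_nhds hx) (fun z hz => hBy z hz)
    exact heq.deriv_eq.trans hRHS.deriv
  have hderivφ : deriv φ x = D / (γ * x + δ) ^ 2 := (hφD x hz).deriv
  simp only [matS]
  rw [hderivB, hBy x hx, hderivφ]
  exact schwarz_alg (A (φ x)) (deriv A (φ x)) γ D (γ * x + δ) hz hdet
end

section
/- Let U ⊆ ℂ be open and let f : ℂ → M_d(ℂ) be analytic on U with f'(x) invertible for all x ∈ U. Let (A B; C D) be an invertible 2d×2d complex matrix written in d×d blocks, and suppose C·f(x)+D is invertible for all x ∈ U. Define g(x) := (A·f(x)+B)·(C·f(x)+D)⁻¹. Then g'(x) is invertible for all x ∈ U and the matrix-valued Schwartz derivative transforms by conjugation: S(g)(x) = (C·f(x)+D) · S(f)(x) · (C·f(x)+D)⁻¹ for all x ∈ U. -/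
open Matrix

attribute [local instance] Matrix.normedAddCommGroup Matrix.normedSpace

variable {d : ℕ}
local notation "Md" => Matrix (Fin d) (Fin d) ℂ

-- multiplication as a continuous bilinear map
noncomputable def mulCLM : Md →L[ℂ] Md →L[ℂ] Md :=
  LinearMap.toContinuousLinearMap
    { toFun := fun a => LinearMap.toContinuousLinearMap (LinearMap.mul ℂ Md a)
      map_add' := by intro a b; ext c; simp [add_mul]
      map_smul' := by intro r a; ext c; simp [smul_mul_assoc] }

@[simp] lemma mulCLM_apply (a b : Md) : mulCLM a b = a * b := rfl

theorem HasDerivAt.mmul {u v : ℂ → Md} {u' v' : Md} {x : ℂ}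
    (hu : HasDerivAt u u' x) (hv : HasDerivAt v v' x) :
    HasDerivAt (fun t => u t * v t) (u' * v x + u x * v') x := by
  letI : NormedRing Md := Matrix.linftyOpNormedRing
  letI : NormedAlgebra ℂ Md := Matrix.linftyOpNormedAlgebra
  exact hu.mul hv

theorem differentiable_entry (i j : Fin d) :
    Differentiable ℂ (fun A : Md => A i j) := by
  have : (fun A : Md => A i j)
      = (ContinuousLinearMap.proj (R := ℂ) (φ := fun _ : Fin d => ℂ) j).comp
        (ContinuousLinearMap.proj (R := ℂ) (φ := fun _ : Fin d => Fin d → ℂ) i) := rfl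
  rw [this]
  exact ContinuousLinearMap.differentiable _

theorem differentiable_det : Differentiable ℂ (fun A : Md => A.det) := by
  classical
  have : (fun A : Md => A.det)
      = fun A : Md => ∑ σ : Equiv.Perm (Fin d),
          (Equiv.Perm.sign σ : ℂ) * ∏ i, A (σ i) i := by
    funext A; rw [Matrix.det_apply']
  rw [this]
  apply Differentiable.fun_sum
  intro σ _
  apply Differentiable.const_mul
  have : ∀ s : Finset (Fin d), Differentiable ℂ (fun A : Md => ∏ i ∈ s, A (σ i) i) := by
    intro s
    induction s using Finset.induction with
    | empty => simpa using differentiable_const (1 : ℂ)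
    | insert _ _ hni ih =>
      simp only [Finset.prod_insert hni]
      exact (differentiable_entry _ _).mul ih
  exact this Finset.univ

theorem differentiable_updateRow (r : Fin d) (c : Fin d → ℂ) :
    Differentiable ℂ (fun A : Md => A.updateRow r c) := by
  classical
  refine differentiable_pi.2 ?_
  intro i
  rw [differentiable_pi]
  intro j
  by_cases h : i = r
  · subst h
    have : (fun A : Md => A.updateRow i c i j) = fun _ => c j := by
      funext A; simp [Matrix.updateRow_apply]
    rw [this]; exact differentiable_const _
  · have : (fun A : Md => A.updateRow r c i j) = fun A : Md => A i j := by
      funext A; simp [Matrix.updateRow_apply, h]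
    rw [this]; exact differentiable_entry i j

theorem differentiable_adjugate :
    Differentiable ℂ (fun A : Md => A.adjugate) := by
  classical
  refine differentiable_pi.2 ?_
  intro i
  rw [differentiable_pi]
  intro j
  have : (fun A : Md => A.adjugate i j)
      = fun A : Md => (A.updateRow j (Pi.single i 1)).det := by
    funext A; rw [Matrix.adjugate_apply]
  rw [this]
  exact differentiable_det.comp (differentiable_updateRow j (Pi.single i 1))

theorem differentiableAt_matinv {A₀ : Md} (h : IsUnit A₀) :
    DifferentiableAt ℂ (fun A : Md => A⁻¹) A₀ := by
  have hd : A₀.det ≠ 0 := by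
    have := (Matrix.isUnit_iff_isUnit_det A₀).mp h
    simpa [isUnit_iff_ne_zero] using this
  have heq : (fun A : Md => A⁻¹) = fun A : Md => (A.det)⁻¹ • A.adjugate := by
    funext A; rw [Matrix.inv_def, Ring.inverse_eq_inv']
  rw [heq]
  exact ((differentiable_det A₀).inv hd).smul (differentiable_adjugate A₀)

theorem isOpen_isUnit : IsOpen {A : Md | IsUnit A} := by
  have : {A : Md | IsUnit A} = (fun A : Md => A.det) ⁻¹' {z : ℂ | z ≠ 0} := by
    ext A
    simp [Matrix.isUnit_iff_isUnit_det, isUnit_iff_ne_zero]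
  rw [this]
  exact (isOpen_ne_fun (by fun_prop) continuous_const).preimage
    (Continuous.matrix_det continuous_id)

theorem HasDerivAt.matinv {u : ℂ → Md} {u' : Md} {x : ℂ}
    (hu : HasDerivAt u u' x) (hx : IsUnit (u x)) :
    HasDerivAt (fun t => (u t)⁻¹) (-((u x)⁻¹ * u' * (u x)⁻¹)) x := by
  have hdet : IsUnit (u x).det := (Matrix.isUnit_iff_isUnit_det _).mp hx
  have hw : DifferentiableAt ℂ (fun t => (u t)⁻¹) x :=
    (differentiableAt_matinv hx).comp x hu.differentiableAt
  set w := fun t => (u t)⁻¹ with hwdef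
  have hw' : HasDerivAt w (_root_.deriv w x) x := hw.hasDerivAt
  have hev : ∀ᶠ t in nhds x, IsUnit (u t) :=
    hu.continuousAt.preimage_mem_nhds (isOpen_isUnit.mem_nhds hx)
  have hev1 : (fun t => u t * w t) =ᶠ[nhds x] fun _ => 1 := by
    filter_upwards [hev] with t ht
    exact Matrix.mul_nonsing_inv _ ((Matrix.isUnit_iff_isUnit_det _).mp ht)
  have hprod : HasDerivAt (fun t => u t * w t) (u' * w x + u x * _root_.deriv w x) x :=
    hu.mmul hw'
  have hzero : HasDerivAt (fun t => u t * w t) 0 x := by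
    exact (hasDerivAt_const x (1 : Md)).congr_of_eventuallyEq hev1
  have heq : u' * w x + u x * _root_.deriv w x = 0 := hprod.unique hzero
  have : _root_.deriv w x = -((u x)⁻¹ * u' * (u x)⁻¹) := by
    have h1 : u x * _root_.deriv w x = -(u' * (u x)⁻¹) := by
      rw [eq_neg_iff_add_eq_zero, add_comm]; exact heq
    calc _root_.deriv w x = ((u x)⁻¹ * u x) * _root_.deriv w x := by
          rw [Matrix.nonsing_inv_mul _ hdet, one_mul]
      _ = (u x)⁻¹ * (u x * _root_.deriv w x) := by rw [mul_assoc]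
      _ = -((u x)⁻¹ * u' * (u x)⁻¹) := by rw [h1, mul_neg, mul_assoc]
  rwa [this] at hw'

-- algebra lemma for k's right inverse
lemma kinv_alg {R : Type*} [Ring R] (A B C D f j E G : R)
    (hj1 : j * (C * f + D) = 1)
    (h11 : A * E + B * G = 1) (h21 : C * E + D * G = 0) :
    (A - (A * f + B) * j * C) * (E - f * G) = 1 := by
  have key : (A - (A * f + B) * j * C) * (E - f * G)
      - (A * E + B * G) + ((A * f + B) * j) * (C * E + D * G)
      - ((A * f + B) * (j * (C * f + D)) - (A * f + B)) * G = 0 := by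
    noncomm_ring
  rw [h11, h21, hj1, mul_zero, add_zero, mul_one, sub_self, zero_mul, sub_zero,
    sub_eq_zero] at key
  exact key

-- algebra lemma: (G1)⁻¹ * G2 = P
lemma invG2_alg {R : Type*} [Ring R] [Algebra ℂ R] (h j k m F1 iF F2 C : R)
    (hj : h * j = 1) (jh : j * h = 1) (mk : m * k = 1)
    (iFF : iF * F1 = 1) (FiF : F1 * iF = 1) :
    (h * iF * m) * ((-(k * (F1 * j) * C)) * (F1 * j)
        + k * (F2 * j + F1 * -(j * (C * F1) * j)))
      = h * (iF * F2) * j - (2:ℂ) • (C * F1 * j) := by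
  have hj' : ∀ r : R, h * (j * r) = r := fun r => by rw [← mul_assoc, hj, one_mul]
  have jh' : ∀ r : R, j * (h * r) = r := fun r => by rw [← mul_assoc, jh, one_mul]
  have mk' : ∀ r : R, m * (k * r) = r := fun r => by rw [← mul_assoc, mk, one_mul]
  have iFF' : ∀ r : R, iF * (F1 * r) = r := fun r => by rw [← mul_assoc, iFF, one_mul]
  simp only [mul_add, add_mul, mul_neg, neg_mul, mul_assoc, smul_sub, smul_add, two_smul]
  simp only [mk', iFF', hj', jh']
  abel

-- final schwarzian algebra
lemma schwarz_alg_s1 {R : Type*} [Ring R] [Algebra ℂ R] (h j a S c e b : R)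
    (hj : h * j = 1) (jh : j * h = 1) (ce : c * a = e) :
    (c * a + h * S) * j + h * a * -(j * c * j)
      - (2:ℂ) • ((0 * b + e) * j + c * -(j * c * j))
      - (1/2:ℂ) • (h * a * j - (2:ℂ) • (c * j)) ^ 2
      = h * (S - (1/2:ℂ) • a ^ 2) * j := by
  subst ce
  have hj' : ∀ r : R, h * (j * r) = r := fun r => by rw [← mul_assoc, hj, one_mul]
  have jh' : ∀ r : R, j * (h * r) = r := fun r => by rw [← mul_assoc, jh, one_mul]
  simp only [pow_two, zero_mul, zero_add, mul_sub, sub_mul, mul_add, add_mul, smul_sub,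
    smul_add, mul_smul_comm, smul_mul_assoc, mul_assoc, smul_smul, mul_neg, neg_mul]
  simp only [hj', jh']
  module



/-- The matrix Schwartz derivative transforms by conjugation under the
fractional linear action of `GL_{2d}(ℂ)`. -/
theorem matS_GL2d_conjugation {d : ℕ} (U : Set ℂ) (hU : IsOpen U)
    (f : ℂ → Matrix (Fin d) (Fin d) ℂ) (hf : AnalyticOnNhd ℂ f U)
    (hf' : ∀ x ∈ U, IsUnit (deriv f x))
    (A B C D : Matrix (Fin d) (Fin d) ℂ)
    (hblk : IsUnit (Matrix.fromBlocks A B C D))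
    (hden : ∀ x ∈ U, IsUnit (C * f x + D))
    (g : ℂ → Matrix (Fin d) (Fin d) ℂ)
    (hg : ∀ x, g x = (A * f x + B) * (C * f x + D)⁻¹) :
    ∀ x ∈ U, IsUnit (deriv g x) ∧
      matS g x = (C * f x + D) * matS f x * (C * f x + D)⁻¹ := by
  classical
  -- block inverse facts
  have hMdet : IsUnit (Matrix.fromBlocks A B C D).det :=
    (Matrix.isUnit_iff_isUnit_det _).mp hblk
  set N := (Matrix.fromBlocks A B C D)⁻¹ with hNdef
  have hMN : Matrix.fromBlocks A B C D * N = 1 := Matrix.mul_nonsing_inv _ hMdet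
  set E := N.toBlocks₁₁ with hE
  set Gm := N.toBlocks₂₁ with hGm
  have hMN' : Matrix.fromBlocks (A * E + B * Gm) (A * N.toBlocks₁₂ + B * N.toBlocks₂₂)
      (C * E + D * Gm) (C * N.toBlocks₁₂ + D * N.toBlocks₂₂)
      = Matrix.fromBlocks 1 0 0 1 := by
    rw [← Matrix.fromBlocks_multiply, Matrix.fromBlocks_toBlocks, Matrix.fromBlocks_one]
    exact hMN
  rw [Matrix.fromBlocks_inj] at hMN'
  have h11 : A * E + B * Gm = 1 := hMN'.1
  have h21 : C * E + D * Gm = 0 := hMN'.2.2.1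
  -- function shorthands
  set j : ℂ → Matrix (Fin d) (Fin d) ℂ := fun t => (C * f t + D)⁻¹ with hjdef
  -- inverse relations on U
  have hj1 : ∀ t ∈ U, j t * (C * f t + D) = 1 := fun t ht =>
    Matrix.nonsing_inv_mul _ ((Matrix.isUnit_iff_isUnit_det _).mp (hden t ht))
  have hj2 : ∀ t ∈ U, (C * f t + D) * j t = 1 := fun t ht =>
    Matrix.mul_nonsing_inv _ ((Matrix.isUnit_iff_isUnit_det _).mp (hden t ht))
  have hkinv : ∀ t ∈ U,
      (A - (A * f t + B) * j t * C) * (E - f t * Gm) = 1 := fun t ht =>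
    kinv_alg A B C D (f t) (j t) E Gm (hj1 t ht) h11 h21
  -- derivative facts
  have hdf : ∀ t ∈ U, HasDerivAt f (deriv f t) t := fun t ht =>
    (hf t ht).differentiableAt.hasDerivAt
  have hanF1 : AnalyticOnNhd ℂ (deriv f) U := hf.deriv
  have hdF1 : ∀ t ∈ U, HasDerivAt (deriv f) (deriv (deriv f) t) t := fun t ht =>
    (hanF1 t ht).differentiableAt.hasDerivAt
  have hanF2 : AnalyticOnNhd ℂ (deriv (deriv f)) U := hanF1.deriv
  have hh : ∀ t ∈ U, HasDerivAt (fun s => C * f s + D) (C * deriv f t) t := by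
    intro t ht
    have := ((hasDerivAt_const t C).mmul (hdf t ht)).add_const D
    simp only [zero_mul, zero_add] at this; exact this
  have hj : ∀ t ∈ U,
      HasDerivAt j (-(j t * (C * deriv f t) * j t)) t := fun t ht =>
    (hh t ht).matinv (hden t ht)
  -- g and its derivative
  set k : ℂ → Matrix (Fin d) (Fin d) ℂ :=
    fun t => A - (A * f t + B) * j t * C with hkdef
  set G1 : ℂ → Matrix (Fin d) (Fin d) ℂ :=
    fun t => k t * (deriv f t * j t) with hG1def
  have halg : ∀ t : ℂ,
      (0 * f t + A * deriv f t) * j t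
        + (A * f t + B) * -(j t * (C * deriv f t) * j t) = G1 t := by
    intro t
    show _ = (A - (A * f t + B) * j t * C) * (deriv f t * j t)
    noncomm_ring
  have hgd : ∀ t ∈ U, HasDerivAt g (G1 t) t := by
    intro t ht
    have h0 : HasDerivAt (fun s => (A * f s + B) * j s)
        ((0 * f t + A * deriv f t) * j t
          + (A * f t + B) * -(j t * (C * deriv f t) * j t)) t :=
      (((hasDerivAt_const t A).mmul (hdf t ht)).add_const B).mmul (hj t ht)
    rw [halg t] at h0
    exact h0.congr_of_eventuallyEq (Filter.Eventually.of_forall fun s => hg s)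
  have hderivg : ∀ t ∈ U, deriv g t = G1 t := fun t ht => (hgd t ht).deriv
  -- derivative of k and of G1
  have hkd : ∀ t ∈ U, HasDerivAt k (-(G1 t * C)) t := by
    intro t ht
    have h0 : HasDerivAt (fun s => (A * f s + B) * j s * C)
        (((0 * f t + A * deriv f t) * j t
          + (A * f t + B) * -(j t * (C * deriv f t) * j t)) * C
          + ((A * f t + B) * j t) * 0) t :=
      ((((hasDerivAt_const t A).mmul (hdf t ht)).add_const B).mmul
        (hj t ht)).mmul (hasDerivAt_const t C)
    rw [halg t, mul_zero, add_zero] at h0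
    have h1 := (hasDerivAt_const t A).sub h0
    simp only [zero_sub] at h1; exact h1
  set G2 : ℂ → Matrix (Fin d) (Fin d) ℂ := fun t =>
    -(G1 t * C) * (deriv f t * j t)
      + k t * (deriv (deriv f) t * j t
          + deriv f t * -(j t * (C * deriv f t) * j t)) with hG2def
  have hG1d : ∀ t ∈ U, HasDerivAt G1 (G2 t) t := fun t ht =>
    (hkd t ht).mmul ((hdF1 t ht).mmul (hj t ht))
  have hderiv2 : ∀ t ∈ U, deriv (deriv g) t = G2 t := by
    intro t ht
    have hev : deriv g =ᶠ[nhds t] G1 := by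
      filter_upwards [hU.mem_nhds ht] with s hs
      exact hderivg s hs
    erw [hev.deriv_eq]
    exact (hG1d t ht).deriv
  -- inverse of G1
  have hFiF : ∀ t ∈ U, deriv f t * (deriv f t)⁻¹ = 1 := fun t ht =>
    Matrix.mul_nonsing_inv _ ((Matrix.isUnit_iff_isUnit_det _).mp (hf' t ht))
  have hiFF : ∀ t ∈ U, (deriv f t)⁻¹ * deriv f t = 1 := fun t ht =>
    Matrix.nonsing_inv_mul _ ((Matrix.isUnit_iff_isUnit_det _).mp (hf' t ht))
  have hmk : ∀ t ∈ U, (E - f t * Gm) * k t = 1 := fun t ht =>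
    mul_eq_one_comm.mp (hkinv t ht)
  have hG1right : ∀ t ∈ U,
      G1 t * ((C * f t + D) * (deriv f t)⁻¹ * (E - f t * Gm)) = 1 := by
    intro t ht
    show (k t * (deriv f t * j t)) * ((C * f t + D) * (deriv f t)⁻¹ * (E - f t * Gm)) = 1
    have jh' : ∀ r, j t * ((C * f t + D) * r) = r := fun r => by
      rw [← mul_assoc, hj1 t ht, one_mul]
    have FiF' : ∀ r, deriv f t * ((deriv f t)⁻¹ * r) = r := fun r => by
      rw [← mul_assoc, hFiF t ht, one_mul]
    simp only [mul_assoc, jh', FiF']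
    exact hkinv t ht
  have hG1unit : ∀ t ∈ U, IsUnit (G1 t) := by
    intro t ht
    exact ⟨⟨G1 t, (C * f t + D) * (deriv f t)⁻¹ * (E - f t * Gm),
      hG1right t ht, mul_eq_one_comm.mp (hG1right t ht)⟩, rfl⟩
  have hG1inv : ∀ t ∈ U,
      (G1 t)⁻¹ = (C * f t + D) * (deriv f t)⁻¹ * (E - f t * Gm) := fun t ht =>
    Matrix.inv_eq_right_inv (hG1right t ht)
  -- the function P
  set q : ℂ → Matrix (Fin d) (Fin d) ℂ :=
    fun t => (deriv f t)⁻¹ * deriv (deriv f) t with hqdef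
  set P : ℂ → Matrix (Fin d) (Fin d) ℂ := fun t =>
    (C * f t + D) * q t * j t - (2:ℂ) • (C * deriv f t * j t) with hPdef
  have hQP : ∀ t ∈ U, (deriv g t)⁻¹ * deriv (deriv g) t = P t := by
    intro t ht
    rw [hderivg t ht, hderiv2 t ht, hG1inv t ht]
    exact invG2_alg (C * f t + D) (j t) (k t) (E - f t * Gm) (deriv f t)
      ((deriv f t)⁻¹) (deriv (deriv f) t) C (hj2 t ht) (hj1 t ht) (hmk t ht)
      (hiFF t ht) (hFiF t ht)
  -- conclusion
  intro x hx
  constructor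
  · rw [hderivg x hx]; exact hG1unit x hx
  · have hiF : HasDerivAt (fun t => (deriv f t)⁻¹)
        (-((deriv f x)⁻¹ * deriv (deriv f) x * (deriv f x)⁻¹)) x :=
      (hdF1 x hx).matinv (hf' x hx)
    have hF2dx : HasDerivAt (deriv (deriv f)) (deriv (deriv (deriv f)) x) x :=
      (hanF2 x hx).differentiableAt.hasDerivAt
    have hq : HasDerivAt q (deriv q x) x :=
      ((hiF.mmul hF2dx).differentiableAt).hasDerivAt
    have hP : HasDerivAt P
        ((C * deriv f x * q x + (C * f x + D) * deriv q x) * j x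
          + (C * f x + D) * q x * -(j x * (C * deriv f x) * j x)
          - (2:ℂ) • ((0 * deriv f x + C * deriv (deriv f) x) * j x
              + C * deriv f x * -(j x * (C * deriv f x) * j x))) x :=
      (((hh x hx).mmul hq).mmul (hj x hx)).sub
        (HasDerivAt.const_smul (2:ℂ)
          (((hasDerivAt_const x C).mmul (hdF1 x hx)).mmul (hj x hx)))
    have hQev : (fun t => (deriv g t)⁻¹ * deriv (deriv g) t) =ᶠ[nhds x] P := by
      filter_upwards [hU.mem_nhds hx] with s hs
      exact hQP s hs
    have hmatSf : matS f x = deriv q x - (1/2:ℂ) • (q x)^2 := rfl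
    have hce : (C * deriv f x) * q x = C * deriv (deriv f) x := by
      show (C * deriv f x) * ((deriv f x)⁻¹ * deriv (deriv f) x) = _
      rw [← mul_assoc, mul_assoc C, hFiF x hx, mul_one]
    calc matS g x
        = deriv P x - (1/2:ℂ) • (P x)^2 := by
          show deriv (fun t => (deriv g t)⁻¹ * deriv (deriv g) t) x
              - (1/2:ℂ) • ((deriv g x)⁻¹ * deriv (deriv g) x)^2 = _
          erw [hQev.deriv_eq, hQP x hx]; rfl
      _ = (C * f x + D) * (deriv q x - (1/2:ℂ) • (q x)^2) * j x := by
          erw [hP.deriv]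
          exact schwarz_alg_s1 (C * f x + D) (j x) (q x) (deriv q x)
            (C * deriv f x) (C * deriv (deriv f) x) (deriv f x)
            (hj2 x hx) (hj1 x hx) hce
      _ = (C * f x + D) * matS f x * (C * f x + D)⁻¹ := by rw [hmatSf]
end

section
/- Let x₀ ∈ ℂ and let y₀, y₀', z₀ ∈ M_d(ℂ) with y₀' invertible. Set A := y₀' − y₀·z₀, B := y₀ + y₀·z₀·x₀ − y₀'·x₀, C := −z₀, D := 1 + z₀·x₀. Then the 2d×2d block matrix (A B; C D) is invertible, x₀·C+D = 1, and the function f(x) := (x·A+B)·(x·C+D)⁻¹, defined on the open set where x·C+D is invertible, satisfies the initial conditions f(x₀) = y₀, f'(x₀) = y₀', and (1/2)·(f'(x₀))⁻¹·f''(x₀) = z₀. -/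
open Matrix

attribute [local instance] Matrix.normedAddCommGroup Matrix.normedSpace

private lemma hasDerivAt_matrix {d : ℕ} {f : ℂ → Matrix (Fin d) (Fin d) ℂ}
    {f' : Matrix (Fin d) (Fin d) ℂ} {x : ℂ} :
    HasDerivAt f f' x ↔ ∀ i j, HasDerivAt (fun y => f y i j) (f' i j) x := by
  exact hasDerivAt_pi.trans (forall_congr' fun i => hasDerivAt_pi)

private lemma differentiable_matrix {d : ℕ} {f : ℂ → Matrix (Fin d) (Fin d) ℂ}
    (h : ∀ i j, Differentiable ℂ fun y => f y i j) : Differentiable ℂ f :=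
  fun x => differentiableAt_pi.2 fun i => differentiableAt_pi.2 fun j => (h i j) x

private lemma HasDerivAt.matrixMul {d : ℕ} {f g : ℂ → Matrix (Fin d) (Fin d) ℂ}
    {f' g' : Matrix (Fin d) (Fin d) ℂ} {x : ℂ}
    (hf : HasDerivAt f f' x) (hg : HasDerivAt g g' x) :
    HasDerivAt (fun y => f y * g y) (f' * g x + f x * g') x := by
  rw [hasDerivAt_matrix] at hf hg ⊢
  intro i j
  have : ∀ y, (f y * g y) i j = ∑ k, f y i k * g y k j := fun y => Matrix.mul_apply
  simp only [this, Matrix.add_apply, Matrix.mul_apply, ← Finset.sum_add_distrib]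
  exact HasDerivAt.fun_sum fun k _ => (hf i k).mul (hg k j)

private lemma differentiable_matrix_det {d : ℕ} {M : ℂ → Matrix (Fin d) (Fin d) ℂ}
    (h : ∀ i j, Differentiable ℂ fun y => M y i j) :
    Differentiable ℂ fun y => (M y).det := by
  simp only [Matrix.det_apply']
  refine Differentiable.fun_sum fun σ _ => Differentiable.const_mul ?_ _
  exact Differentiable.fun_finset_prod fun i _ => h (σ i) i
/-- The matrix Möbius function with blocks
`A = y₀' - y₀z₀`, `B = y₀ + y₀z₀x₀ - y₀'x₀`, `C = -z₀`, `D = 1 + z₀x₀`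
solves the initial value problem `(f, f', (1/2)(f')⁻¹f'')(x₀) = (y₀, y₀', z₀)`,
and the block matrix is invertible with `x₀C + D = 1`. -/
theorem matrix_moebius_initial_conditions {d : ℕ} (x₀ : ℂ)
    (y₀ y₀' z₀ : Matrix (Fin d) (Fin d) ℂ) (hy₀' : IsUnit y₀')
    (A B C D : Matrix (Fin d) (Fin d) ℂ)
    (hA : A = y₀' - y₀ * z₀)
    (hB : B = y₀ + x₀ • (y₀ * z₀) - x₀ • y₀')
    (hC : C = -z₀)
    (hD : D = 1 + x₀ • z₀)
    (f : ℂ → Matrix (Fin d) (Fin d) ℂ)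
    (hf : ∀ x, f x = (x • A + B) * (x • C + D)⁻¹) :
    IsUnit (Matrix.fromBlocks A B C D) ∧ x₀ • C + D = 1 ∧
      f x₀ = y₀ ∧ deriv f x₀ = y₀' ∧
      (1 / 2 : ℂ) • ((deriv f x₀)⁻¹ * deriv (deriv f) x₀) = z₀ := by
  have hx1 : x₀ • C + D = 1 := by rw [hC, hD]; module
  have hgx : x₀ • A + B = y₀ := by rw [hA, hB]; module
  -- entries of x • C + D are differentiable
  have hentries : ∀ i j, Differentiable ℂ fun y : ℂ => (y • C + D) i j := by
    intro i j
    simp only [Matrix.add_apply, Matrix.smul_apply, smul_eq_mul]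
    exact (differentiable_id.mul_const (C i j)).add_const (D i j)
  have hdet : Differentiable ℂ fun y : ℂ => (y • C + D).det :=
    differentiable_matrix_det hentries
  have hadj : ∀ i j, Differentiable ℂ fun y : ℂ => (y • C + D).adjugate i j := by
    intro i j
    simp only [Matrix.adjugate_apply]
    refine differentiable_matrix_det ?_
    intro k l
    simp only [Matrix.updateRow_apply]
    split_ifs
    · exact differentiable_const _
    · exact hentries k l
  set U : Set ℂ := {x | (x • C + D).det ≠ 0} with hU_def
  have hUopen : IsOpen U := isOpen_compl_singleton.preimage hdet.continuous
  have hx₀U : x₀ ∈ U := by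
    simp only [hU_def, Set.mem_setOf_eq, hx1, Matrix.det_one]
    exact one_ne_zero
  have hInvdiff : ∀ x ∈ U, DifferentiableAt ℂ (fun y => (y • C + D)⁻¹) x := by
    intro x hx
    have heq : (fun y : ℂ => (y • C + D)⁻¹) =
        fun y => ((y • C + D).det)⁻¹ • (y • C + D).adjugate := by
      funext y; rw [Matrix.inv_def, Ring.inverse_eq_inv']
    rw [heq]
    exact (hdet.differentiableAt.inv hx).smul
      ((differentiable_matrix hadj).differentiableAt)
  have hlinC : ∀ x : ℂ, HasDerivAt (fun y : ℂ => y • C + D) C x := by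
    intro x
    have h := ((hasDerivAt_id x).smul_const C).add_const D
    rw [one_smul] at h
    exact h
  have hlinA : ∀ x : ℂ, HasDerivAt (fun y : ℂ => y • A + B) A x := by
    intro x
    have h := ((hasDerivAt_id x).smul_const A).add_const B
    rw [one_smul] at h
    exact h
  -- derivative of the inverse
  have hInvD : ∀ x ∈ U,
      HasDerivAt (fun y => (y • C + D)⁻¹)
        (-((x • C + D)⁻¹ * C * (x • C + D)⁻¹)) x := by
    intro x hx
    have hI : HasDerivAt (fun y => (y • C + D)⁻¹)
        (deriv (fun y => (y • C + D)⁻¹) x) x := (hInvdiff x hx).hasDerivAt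
    have hprod := hI.matrixMul (hlinC x)
    have hev : (fun y => (y • C + D)⁻¹ * (y • C + D)) =ᶠ[nhds x]
        (fun _ => (1 : Matrix (Fin d) (Fin d) ℂ)) :=
      Filter.eventuallyEq_of_mem (hUopen.mem_nhds hx) fun y hy =>
        Matrix.nonsing_inv_mul _ (isUnit_iff_ne_zero.2 hy)
    have hconst : HasDerivAt (fun _ : ℂ => (1 : Matrix (Fin d) (Fin d) ℂ))
        (deriv (fun y => (y • C + D)⁻¹) x * (x • C + D) + (x • C + D)⁻¹ * C) x :=
      hprod.congr_of_eventuallyEq hev.symm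
    have hzero : deriv (fun y => (y • C + D)⁻¹) x * (x • C + D) + (x • C + D)⁻¹ * C = 0 :=
      hconst.unique (hasDerivAt_const x 1)
    have hIC : deriv (fun y => (y • C + D)⁻¹) x * (x • C + D) = -((x • C + D)⁻¹ * C) :=
      eq_neg_of_add_eq_zero_left hzero
    have hmul : (x • C + D) * (x • C + D)⁻¹ = 1 :=
      Matrix.mul_nonsing_inv _ (isUnit_iff_ne_zero.2 hx)
    have hval : deriv (fun y => (y • C + D)⁻¹) x = -((x • C + D)⁻¹ * C * (x • C + D)⁻¹) := by
      calc deriv (fun y => (y • C + D)⁻¹) x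
          = deriv (fun y => (y • C + D)⁻¹) x * ((x • C + D) * (x • C + D)⁻¹) := by
            rw [hmul, mul_one]
        _ = (deriv (fun y => (y • C + D)⁻¹) x * (x • C + D)) * (x • C + D)⁻¹ := by
            rw [mul_assoc]
        _ = -((x • C + D)⁻¹ * C) * (x • C + D)⁻¹ := by rw [hIC]
        _ = -((x • C + D)⁻¹ * C * (x • C + D)⁻¹) := by rw [neg_mul]
    rw [← hval]; exact hI
  -- derivative of f
  have hfD : ∀ x ∈ U,
      HasDerivAt f (A * (x • C + D)⁻¹ - f x * (C * (x • C + D)⁻¹)) x := by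
    intro x hx
    have h1 := (hlinA x).matrixMul (hInvD x hx)
    have h2 : (fun y => (y • A + B) * (y • C + D)⁻¹) = f := by
      funext y; rw [hf y]
    rw [h2] at h1
    have h3 : A * (x • C + D)⁻¹ + (x • A + B) * -((x • C + D)⁻¹ * C * (x • C + D)⁻¹)
        = A * (x • C + D)⁻¹ - f x * (C * (x • C + D)⁻¹) := by
      rw [hf x, mul_neg, ← sub_eq_add_neg]
      congr 1
      simp only [mul_assoc]
    rw [h3] at h1
    exact h1
  have hInvx₀ : (x₀ • C + D)⁻¹ = 1 := by rw [hx1, inv_one]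
  have hfx₀ : f x₀ = y₀ := by rw [hf x₀, hgx, hx1, inv_one, mul_one]
  have hAC : A - y₀ * C = y₀' := by rw [hA, hC]; noncomm_ring
  have hd1 : deriv f x₀ = y₀' := by
    have h := (hfD x₀ hx₀U).deriv
    rw [hInvx₀, hfx₀, mul_one, mul_one, hAC] at h
    exact h
  -- second derivative
  have hevd : deriv f =ᶠ[nhds x₀]
      fun x => A * (x • C + D)⁻¹ - f x * (C * (x • C + D)⁻¹) :=
    Filter.eventuallyEq_of_mem (hUopen.mem_nhds hx₀U) fun y hy => (hfD y hy).deriv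
  have t1 := (hasDerivAt_const x₀ A).matrixMul (hInvD x₀ hx₀U)
  have t2i := (hasDerivAt_const x₀ C).matrixMul (hInvD x₀ hx₀U)
  have t2 := (hfD x₀ hx₀U).matrixMul t2i
  have hG := t1.sub t2
  have hd2 : deriv (deriv f) x₀ = (2 : ℂ) • (y₀' * z₀) := by
    refine (hevd.deriv_eq.trans hG.deriv).trans ?_
    rw [hInvx₀, hfx₀]
    rw [hA, hC]
    simp only [mul_one, one_mul, zero_mul, mul_neg, neg_mul, zero_add, two_smul]
    noncomm_ring
  have hinv : y₀'⁻¹ * y₀' = 1 :=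
    Matrix.nonsing_inv_mul y₀' ((Matrix.isUnit_iff_isUnit_det y₀').mp hy₀')
  refine ⟨?_, hx1, hfx₀, hd1, ?_⟩
  · have hfactor : Matrix.fromBlocks A B C D =
        Matrix.fromBlocks A y₀ C 1 *
          Matrix.fromBlocks 1 (-(x₀ • (1 : Matrix (Fin d) (Fin d) ℂ))) 0 1 := by
      rw [Matrix.fromBlocks_multiply]
      have e1 : A * 1 + y₀ * 0 = A := by rw [mul_one, mul_zero, add_zero]
      have e2 : A * -(x₀ • (1 : Matrix (Fin d) (Fin d) ℂ)) + y₀ * 1 = B := by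
        rw [mul_neg, Matrix.mul_smul, mul_one, mul_one, hA, hB]; module
      have e3 : C * 1 + 1 * 0 = C := by rw [mul_one, mul_zero, add_zero]
      have e4 : C * -(x₀ • (1 : Matrix (Fin d) (Fin d) ℂ)) + 1 * 1 = D := by
        rw [mul_neg, Matrix.mul_smul, mul_one, mul_one, hC, hD]; module
      rw [e1, e2, e3, e4]
    rw [hfactor]
    refine IsUnit.mul ?_ ?_
    · rw [Matrix.isUnit_iff_isUnit_det, Matrix.det_fromBlocks_one₂₂, hAC,
        ← Matrix.isUnit_iff_isUnit_det]
      exact hy₀'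
    · rw [Matrix.isUnit_iff_isUnit_det, Matrix.det_fromBlocks_zero₂₁]
      simp
  · rw [hd1, hd2, mul_smul_comm, smul_smul, ← mul_assoc, hinv, one_mul]
    norm_num
end

section
/- Let U ⊆ ℂ be a nonempty connected open set and let f : ℂ → ℂ be analytic on U with f'(x) ≠ 0 for all x ∈ U. Then S(f) := ((f')⁻¹f'')' − (1/2)((f')⁻¹f'')² vanishes identically on U if and only if there exist a, b, c, d ∈ ℂ with a·d − b·c ≠ 0 such that c·x+d ≠ 0 and f(x) = (a·x+b)/(c·x+d) for all x ∈ U. -/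
open Complex Set

private lemma hasDerivAt_lin' (p q x : ℂ) : HasDerivAt (fun t => p * t + q) p x := by
  simpa using ((hasDerivAt_id x).const_mul p).add_const q

private lemma const_of_hasDerivAt_zero' {F : ℂ → ℂ} {s : Set ℂ} (hs : Convex ℝ s)
    (hd : ∀ z ∈ s, HasDerivAt F 0 z) {x y : ℂ} (hx : x ∈ s) (hy : y ∈ s) : F y = F x := by
  have h := hs.norm_image_sub_le_of_norm_hasDerivWithin_le
    (f' := fun _ => (0:ℂ)) (C := 0) (fun z hz => (hd z hz).hasDerivWithinAt)
    (fun z hz => by simp) hx hy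
  rw [zero_mul] at h
  have := norm_le_zero_iff.mp h
  rwa [sub_eq_zero] at this

private lemma local_moebius (U : Set ℂ) (hU : IsOpen U) (f : ℂ → ℂ)
    (hf : AnalyticOnNhd ℂ f U) (hf' : ∀ x ∈ U, deriv f x ≠ 0)
    (hS : ∀ x ∈ U,
      deriv (fun t => (deriv f t)⁻¹ * deriv (deriv f) t) x
        = (1 / 2 : ℂ) * ((deriv f x)⁻¹ * deriv (deriv f) x) ^ 2)
    {x₀ : ℂ} (hx₀ : x₀ ∈ U) :
    ∃ a b c d : ℂ, a * d - b * c ≠ 0 ∧ ∃ r > 0, Metric.ball x₀ r ⊆ U ∧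
      ∀ x ∈ Metric.ball x₀ r, c * x + d ≠ 0 ∧ f x = (a * x + b) / (c * x + d) := by
  have hf1 : AnalyticOnNhd ℂ (deriv f) U := hf.deriv
  have hf2 : AnalyticOnNhd ℂ (deriv (deriv f)) U := hf1.deriv
  have hg : ∀ x ∈ U, AnalyticAt ℂ (fun t => (deriv f t)⁻¹ * deriv (deriv f) t) x := fun x hx =>
    ((hf1 x hx).inv (hf' x hx)).mul (hf2 x hx)
  -- choose the ball
  have hcont : ContinuousAt (fun x => deriv f x / deriv f x₀) x₀ :=
    ((hf1 x₀ hx₀).continuousAt).div_const _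
  have hmem : {x : ℂ | deriv f x / deriv f x₀ ∈ Metric.ball (1:ℂ) 1} ∩ U ∈ nhds x₀ := by
    refine Filter.inter_mem ?_ (hU.mem_nhds hx₀)
    apply hcont.preimage_mem_nhds
    have : deriv f x₀ / deriv f x₀ = 1 := div_self (hf' x₀ hx₀)
    rw [this]
    exact Metric.ball_mem_nhds _ one_pos
  obtain ⟨r, hr, hball⟩ := Metric.mem_nhds_iff.mp hmem
  have hx₀B : x₀ ∈ Metric.ball x₀ r := Metric.mem_ball_self hr
  have hBU : Metric.ball x₀ r ⊆ U := fun x hx => (hball hx).2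
  have hq : ∀ x ∈ Metric.ball x₀ r, deriv f x / deriv f x₀ ∈ slitPlane := by
    intro x hx
    have h1 : ‖deriv f x / deriv f x₀ - 1‖ < 1 := by
      have := (hball hx).1
      simpa [Metric.mem_ball, dist_eq_norm] using this
    have := mem_slitPlane_of_norm_lt_one h1
    simpa using this
  have hq0 : ∀ x ∈ Metric.ball x₀ r, deriv f x / deriv f x₀ ≠ 0 := fun x hx =>
    slitPlane_ne_zero (hq x hx)
  -- the logarithm L(x) = log f'(x₀) + log (f'(x)/f'(x₀)), with exp(L) = f'
  have hexpL : ∀ x ∈ Metric.ball x₀ r,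
      Complex.exp (Complex.log (deriv f x₀) + Complex.log (deriv f x / deriv f x₀))
        = deriv f x := by
    intro x hx
    rw [Complex.exp_add, Complex.exp_log (hf' x₀ hx₀), Complex.exp_log (hq0 x hx),
      mul_comm, div_mul_cancel₀ _ (hf' x₀ hx₀)]
  have hL : ∀ x ∈ Metric.ball x₀ r,
      HasDerivAt (fun t => Complex.log (deriv f x₀) + Complex.log (deriv f t / deriv f x₀))
        ((deriv f x)⁻¹ * deriv (deriv f) x) x := by
    intro x hx
    have hxU := hBU hx
    have hd1 : HasDerivAt (deriv f) (deriv (deriv f) x) x :=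
      ((hf1 x hxU).differentiableAt).hasDerivAt
    have hu : HasDerivAt (fun t => deriv f t / deriv f x₀)
        (deriv (deriv f) x / deriv f x₀) x := hd1.div_const _
    have hlog := (hu.clog (hq x hx)).const_add (Complex.log (deriv f x₀))
    refine hlog.congr_deriv ?_
    have h1 := hf' x hxU
    have h2 := hf' x₀ hx₀
    field_simp
  -- h = exp(-(1/2) L) satisfies h'' = 0
  have hh : ∀ x ∈ Metric.ball x₀ r,
      HasDerivAt (fun t => Complex.exp (-(1/2) *
          (Complex.log (deriv f x₀) + Complex.log (deriv f t / deriv f x₀))))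
        (Complex.exp (-(1/2) *
            (Complex.log (deriv f x₀) + Complex.log (deriv f x / deriv f x₀)))
          * (-(1/2) * ((deriv f x)⁻¹ * deriv (deriv f) x))) x := fun x hx =>
    ((hL x hx).const_mul (-(1/2))).cexp
  have hψ0 : ∀ x ∈ Metric.ball x₀ r,
      HasDerivAt (fun t => Complex.exp (-(1/2) *
          (Complex.log (deriv f x₀) + Complex.log (deriv f t / deriv f x₀)))
        * (-(1/2) * ((deriv f t)⁻¹ * deriv (deriv f) t))) 0 x := by
    intro x hx
    have hxU := hBU hx
    have hgd : HasDerivAt (fun t => (deriv f t)⁻¹ * deriv (deriv f) t)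
        (deriv (fun t => (deriv f t)⁻¹ * deriv (deriv f) t) x) x :=
      ((hg x hxU).differentiableAt).hasDerivAt
    have H := (hh x hx).mul (hgd.const_mul (-(1/2)))
    refine H.congr_deriv ?_
    rw [hS x hxU]
    ring
  -- hence h' is a constant k, and h(x) = k x + m
  obtain ⟨k, hhk⟩ : ∃ k : ℂ, ∀ x ∈ Metric.ball x₀ r,
      HasDerivAt (fun t => Complex.exp (-(1/2) *
          (Complex.log (deriv f x₀) + Complex.log (deriv f t / deriv f x₀)))) k x := by
    refine ⟨Complex.exp (-(1/2) *
        (Complex.log (deriv f x₀) + Complex.log (deriv f x₀ / deriv f x₀)))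
      * (-(1/2) * ((deriv f x₀)⁻¹ * deriv (deriv f) x₀)), fun x hx => ?_⟩
    have hc := const_of_hasDerivAt_zero' (convex_ball x₀ r) hψ0 hx₀B hx
    rw [← hc]
    exact hh x hx
  obtain ⟨m, hlin⟩ : ∃ m : ℂ, ∀ x ∈ Metric.ball x₀ r,
      Complex.exp (-(1/2) *
        (Complex.log (deriv f x₀) + Complex.log (deriv f x / deriv f x₀))) = k * x + m := by
    refine ⟨Complex.exp (-(1/2) *
        (Complex.log (deriv f x₀) + Complex.log (deriv f x₀ / deriv f x₀))) - k * x₀,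
      fun x hx => ?_⟩
    have hφ : ∀ z ∈ Metric.ball x₀ r, HasDerivAt (fun t => Complex.exp (-(1/2) *
        (Complex.log (deriv f x₀) + Complex.log (deriv f t / deriv f x₀))) - k * t) 0 z := by
      intro z hz
      have H := (hhk z hz).sub (hasDerivAt_lin' k 0 z)
      simp only [add_zero, sub_self] at H
      exact H
    have hc := const_of_hasDerivAt_zero' (convex_ball x₀ r) hφ hx₀B hx
    linear_combination hc
  have hne : ∀ x ∈ Metric.ball x₀ r, k * x + m ≠ 0 := by
    intro x hx
    rw [← hlin x hx]
    exact Complex.exp_ne_zero _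
  have hf'eq : ∀ x ∈ Metric.ball x₀ r, deriv f x = ((k * x + m) ^ 2)⁻¹ := by
    intro x hx
    rw [← hlin x hx, sq, ← Complex.exp_add]
    have harg : -(1/2) * (Complex.log (deriv f x₀) + Complex.log (deriv f x / deriv f x₀))
        + -(1/2) * (Complex.log (deriv f x₀) + Complex.log (deriv f x / deriv f x₀))
        = -(Complex.log (deriv f x₀) + Complex.log (deriv f x / deriv f x₀)) := by ring
    rw [harg, Complex.exp_neg, hexpL x hx, inv_inv]
  -- case split on k
  by_cases hk : k = 0
  · have hm : m ≠ 0 := by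
      have := hne x₀ hx₀B
      rwa [hk, zero_mul, zero_add] at this
    obtain ⟨E, hE⟩ : ∃ E : ℂ, ∀ x ∈ Metric.ball x₀ r, f x = (m ^ 2)⁻¹ * x + E := by
      refine ⟨f x₀ - (m ^ 2)⁻¹ * x₀, fun x hx => ?_⟩
      have hφ : ∀ z ∈ Metric.ball x₀ r,
          HasDerivAt (fun t => f t - (m ^ 2)⁻¹ * t) 0 z := by
        intro z hz
        have hfd : HasDerivAt f (deriv f z) z :=
          ((hf z (hBU hz)).differentiableAt).hasDerivAt
        have hval : deriv f z = (m ^ 2)⁻¹ := by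
          rw [hf'eq z hz, hk, zero_mul, zero_add]
        rw [hval] at hfd
        have H := hfd.sub (hasDerivAt_lin' (m ^ 2)⁻¹ 0 z)
        rw [sub_self] at H
        simp only [add_zero] at H
        exact H
      have hc := const_of_hasDerivAt_zero' (convex_ball x₀ r) hφ hx₀B hx
      linear_combination hc
    refine ⟨(m ^ 2)⁻¹, E, 0, 1, by simpa using inv_ne_zero (pow_ne_zero 2 hm),
      r, hr, hBU, fun x hx => ⟨by simp, ?_⟩⟩
    rw [hE x hx]
    simp
  · -- F = -(k⁻¹ (k t + m)⁻¹) is a primitive of f'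
    have hF : ∀ x ∈ Metric.ball x₀ r,
        HasDerivAt (fun t => -(k⁻¹ * (k * t + m)⁻¹)) (((k * x + m) ^ 2)⁻¹) x := by
      intro x hx
      have hinv := (hasDerivAt_lin' k m x).inv (hne x hx)
      have H := (hinv.const_mul k⁻¹).neg
      refine H.congr_deriv ?_
      have := hne x hx
      field_simp
    obtain ⟨E, hE⟩ : ∃ E : ℂ, ∀ x ∈ Metric.ball x₀ r,
        f x = -(k⁻¹ * (k * x + m)⁻¹) + E := by
      refine ⟨f x₀ - -(k⁻¹ * (k * x₀ + m)⁻¹), fun x hx => ?_⟩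
      have hφ : ∀ z ∈ Metric.ball x₀ r,
          HasDerivAt (fun t => f t - -(k⁻¹ * (k * t + m)⁻¹)) 0 z := by
        intro z hz
        have hfd : HasDerivAt f (deriv f z) z :=
          ((hf z (hBU hz)).differentiableAt).hasDerivAt
        rw [hf'eq z hz] at hfd
        have H := hfd.sub (hF z hz)
        rw [sub_self] at H
        exact H
      have hc := const_of_hasDerivAt_zero' (convex_ball x₀ r) hφ hx₀B hx
      linear_combination hc
    refine ⟨E * k ^ 2, E * k * m - 1, k ^ 2, k * m, ?_, r, hr, hBU, fun x hx => ?_⟩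
    · have h1 : E * k ^ 2 * (k * m) - (E * k * m - 1) * k ^ 2 = k ^ 2 := by ring
      rw [h1]
      exact pow_ne_zero 2 hk
    · have hcd : k ^ 2 * x + k * m ≠ 0 := by
        have h2 : k ^ 2 * x + k * m = k * (k * x + m) := by ring
        rw [h2]
        exact mul_ne_zero hk (hne x hx)
      refine ⟨hcd, ?_⟩
      rw [eq_div_iff hcd, hE x hx]
      have h0 := hne x hx
      field_simp
      ring

private lemma hasDerivAt_lin (p q x : ℂ) : HasDerivAt (fun t => p * t + q) p x := by
  simpa using ((hasDerivAt_id x).const_mul p).add_const q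

private lemma const_of_hasDerivAt_zero {F : ℂ → ℂ} {s : Set ℂ} (hs : Convex ℝ s)
    (hd : ∀ z ∈ s, HasDerivAt F 0 z) {x y : ℂ} (hx : x ∈ s) (hy : y ∈ s) : F y = F x := by
  have h := hs.norm_image_sub_le_of_norm_hasDerivWithin_le
    (f' := fun _ => (0:ℂ)) (C := 0) (fun z hz => (hd z hz).hasDerivWithinAt)
    (fun z hz => by simp) hx hy
  rw [zero_mul] at h
  have := norm_le_zero_iff.mp h
  rwa [sub_eq_zero] at this

private lemma moebius_schwarzian (U : Set ℂ) (hU : IsOpen U) (f : ℂ → ℂ)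
    (a b c d : ℂ) (hdet : a * d - b * c ≠ 0)
    (h : ∀ x ∈ U, c * x + d ≠ 0 ∧ f x = (a * x + b) / (c * x + d))
    {x : ℂ} (hx : x ∈ U) :
    deriv (fun t => (deriv f t)⁻¹ * deriv (deriv f) t) x
      - (1 / 2 : ℂ) * ((deriv f x)⁻¹ * deriv (deriv f) x) ^ 2 = 0 := by
  set D := a * d - b * c with hD
  -- first derivative
  have hM : ∀ t : ℂ, c * t + d ≠ 0 →
      HasDerivAt (fun s => (a * s + b) / (c * s + d)) (D / (c * t + d) ^ 2) t := by
    intro t ht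
    have := (hasDerivAt_lin a b t).div (hasDerivAt_lin c d t) ht
    refine this.congr_deriv ?_
    field_simp
    ring
  have hd1 : ∀ t ∈ U, deriv f t = D / (c * t + d) ^ 2 := by
    intro t ht
    have hev : f =ᶠ[nhds t] fun s => (a * s + b) / (c * s + d) :=
      Filter.eventuallyEq_of_mem (hU.mem_nhds ht) (fun y hy => (h y hy).2)
    rw [hev.deriv_eq]
    exact (hM t (h t ht).1).deriv
  -- second derivative
  have hN : ∀ t : ℂ, c * t + d ≠ 0 →
      HasDerivAt (fun s => D / (c * s + d) ^ 2) (-2 * c * D / (c * t + d) ^ 3) t := by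
    intro t ht
    have hpow : HasDerivAt (fun s => (c * s + d) ^ 2) (2 * (c * t + d) * c) t := by
      exact ((hasDerivAt_lin c d t).pow 2).congr_deriv (by norm_num)
    have := ((hpow.inv (pow_ne_zero 2 ht)).const_mul D)
    refine this.congr_deriv ?_
    field_simp
  have hd2 : ∀ t ∈ U, deriv (deriv f) t = -2 * c * D / (c * t + d) ^ 3 := by
    intro t ht
    have hev : deriv f =ᶠ[nhds t] fun s => D / (c * s + d) ^ 2 :=
      Filter.eventuallyEq_of_mem (hU.mem_nhds ht) (fun y hy => hd1 y hy)
    rw [hev.deriv_eq]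
    exact (hN t (h t ht).1).deriv
  -- the ratio
  have hg : ∀ t ∈ U, (deriv f t)⁻¹ * deriv (deriv f) t = -2 * c / (c * t + d) := by
    intro t ht
    rw [hd1 t ht, hd2 t ht]
    have ht' := (h t ht).1
    field_simp
  have hG : HasDerivAt (fun s => -2 * c / (c * s + d)) (2 * c ^ 2 / (c * x + d) ^ 2) x := by
    have := ((hasDerivAt_lin c d x).inv (h x hx).1).const_mul (-2 * c)
    have h2 : (fun s => -2 * c * (c * s + d)⁻¹) = fun s => -2 * c / (c * s + d) := by
      funext s; rw [div_eq_mul_inv]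
    simp only [Pi.inv_apply] at this
    rw [h2] at this
    refine this.congr_deriv ?_
    field_simp
  have hd3 : deriv (fun t => (deriv f t)⁻¹ * deriv (deriv f) t) x
      = 2 * c ^ 2 / (c * x + d) ^ 2 := by
    have hev : (fun t => (deriv f t)⁻¹ * deriv (deriv f) t)
        =ᶠ[nhds x] fun s => -2 * c / (c * s + d) :=
      Filter.eventuallyEq_of_mem (hU.mem_nhds hx) (fun y hy => hg y hy)
    rw [hev.deriv_eq]
    exact hG.deriv
  rw [hd3, hg x hx]
  have hx' := (h x hx).1
  field_simp
  ring


/-- For a scalar analytic function with nonvanishing derivative on a nonempty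
connected open set, the Schwartz derivative `((f')⁻¹f'')' - (1/2)((f')⁻¹f'')²`
vanishes identically iff `f` is a Möbius map. -/
theorem schwarzian_zero_iff_moebius (U : Set ℂ) (hU : IsOpen U)
    (hne : U.Nonempty) (hconn : IsPreconnected U)
    (f : ℂ → ℂ) (hf : AnalyticOnNhd ℂ f U)
    (hf' : ∀ x ∈ U, deriv f x ≠ 0) :
    (∀ x ∈ U,
        deriv (fun t => (deriv f t)⁻¹ * deriv (deriv f) t) x
          - (1 / 2 : ℂ) * ((deriv f x)⁻¹ * deriv (deriv f) x) ^ 2 = 0) ↔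
      ∃ a b c d : ℂ, a * d - b * c ≠ 0 ∧
        ∀ x ∈ U, c * x + d ≠ 0 ∧ f x = (a * x + b) / (c * x + d) := by
  constructor
  · intro hS
    have hS' : ∀ x ∈ U,
        deriv (fun t => (deriv f t)⁻¹ * deriv (deriv f) t) x
          = (1 / 2 : ℂ) * ((deriv f x)⁻¹ * deriv (deriv f) x) ^ 2 := fun x hx =>
      sub_eq_zero.mp (hS x hx)
    obtain ⟨x₀, hx₀⟩ := hne
    obtain ⟨a, b, c, d, hdet, r, hr, hBU, hloc⟩ :=
      local_moebius U hU f hf hf' hS' hx₀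
    refine ⟨a, b, c, d, hdet, ?_⟩
    have hP : AnalyticOnNhd ℂ (fun x => f x * (c * x + d) - (a * x + b)) U := by
      apply AnalyticOnNhd.sub
      · exact hf.mul ((analyticOnNhd_const.mul analyticOnNhd_id).add analyticOnNhd_const)
      · exact (analyticOnNhd_const.mul analyticOnNhd_id).add analyticOnNhd_const
    have hev : (fun x => f x * (c * x + d) - (a * x + b)) =ᶠ[nhds x₀] 0 := by
      refine Filter.eventuallyEq_of_mem (Metric.isOpen_ball.mem_nhds (Metric.mem_ball_self hr))
        (fun y hy => ?_)
      obtain ⟨h1, h2⟩ := hloc y hy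
      simp only [Pi.zero_apply]
      rw [h2, div_mul_cancel₀ _ h1, sub_self]
    have hzero : Set.EqOn (fun x => f x * (c * x + d) - (a * x + b)) 0 U :=
      hP.eqOn_zero_of_preconnected_of_eventuallyEq_zero hconn hx₀ hev
    intro x hx
    have hPx : f x * (c * x + d) - (a * x + b) = 0 := hzero hx
    have hcd : c * x + d ≠ 0 := by
      intro hcd0
      rw [hcd0, mul_zero, zero_sub, neg_eq_zero] at hPx
      exact hdet (by linear_combination a * hcd0 - c * hPx)
    refine ⟨hcd, ?_⟩
    rw [eq_div_iff hcd]
    linear_combination hPx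
  · rintro ⟨a, b, c, d, hdet, h⟩ x hx
    exact moebius_schwarzian U hU f a b c d hdet h hx
end
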